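/- arXiv:1802.06192 — 6 statements merged into one kernel-verified Lean document; each statement's English description precedes it below -/
import Mathlib

section
/- Let μ > 0 and let N be a Poisson(μ)-distributed random variable. Then E[(N − 2μ)⁺] ≤ 6·exp(−μ/3). -/
open MeasureTheory ENNReal

lemma aux_lint {Ω : Type*} [MeasurableSpace Ω] (P : Measure Ω) (N : Ω → ℕ)
    (hNmeas : Measurable N) (f : ℕ → ℝ≥0∞) :
    ∫⁻ ω, f (N ω) ∂P = ∑' k, f k * P {ω | N ω = k} := by
  have hf : Measurable f := measurable_of_countable f
  rw [← lintegral_map hf hNmeas, lintegral_countable' f]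
  refine tsum_congr fun k => ?_
  rw [Measure.map_apply hNmeas (measurableSet_singleton k)]
  rfl

lemma aux_sum (μ : ℝ) (hμ : 0 ≤ μ) :
    ∑' k : ℕ, ENNReal.ofReal ((2:ℝ)^k * (Real.exp (-μ) * μ ^ k / (Nat.factorial k)))
      = ENNReal.ofReal (Real.exp μ) := by
  have hsum : Summable (fun k : ℕ => (2:ℝ)^k * (Real.exp (-μ) * μ ^ k / (Nat.factorial k))) := by
    have := (Real.summable_pow_div_factorial (2*μ)).mul_left (Real.exp (-μ))
    refine this.congr (fun k => ?_)
    rw [mul_pow]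
    ring
  rw [← ENNReal.ofReal_tsum_of_nonneg (fun k => by positivity) hsum]
  congr 1
  have h1 : ∀ k : ℕ, (2:ℝ)^k * (Real.exp (-μ) * μ ^ k / (Nat.factorial k))
      = Real.exp (-μ) * ((2*μ)^k / (Nat.factorial k)) := by
    intro k; rw [mul_pow]; ring
  have h2 : ∑' k : ℕ, (2*μ) ^ k / (Nat.factorial k) = Real.exp (2*μ) := by
    rw [Real.exp_eq_exp_ℝ, NormedSpace.exp_eq_tsum_div]
  rw [tsum_congr h1, tsum_mul_left, h2, ← Real.exp_add]
  ring_nf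

/-- If `N` is Poisson(μ)-distributed with μ > 0, then `E[(N − 2μ)⁺] ≤ 6·exp(−μ/3)`. -/
theorem poisson_expectation_excess_bound
    {Ω : Type*} [MeasurableSpace Ω] (P : Measure Ω) [IsProbabilityMeasure P]
    (μ : ℝ) (hμ : 0 < μ) (N : Ω → ℕ) (hNmeas : Measurable N)
    (hN : ∀ k : ℕ, P {ω | N ω = k}
      = ENNReal.ofReal (Real.exp (-μ) * μ ^ k / (Nat.factorial k))) :
    ∫ ω, max ((N ω : ℝ) - 2 * μ) 0 ∂P ≤ 6 * Real.exp (-μ / 3) := by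
  have hlog2 : 0 < Real.log 2 := Real.log_pos one_lt_two
  set c : ℝ := Real.exp (-(2*Real.log 2)*μ - 1) / Real.log 2 with hc_def
  have hc : 0 < c := by positivity
  -- pointwise bound
  have hpt : ∀ k : ℕ, max ((k:ℝ) - 2 * μ) 0 ≤ c * 2^k := by
    intro k
    have hexp : Real.exp (-(2*Real.log 2)*μ - 1) * 2^k
        = Real.exp (Real.log 2 * ((k:ℝ) - 2*μ) - 1) := by
      have h2k : (2:ℝ)^k = Real.exp ((k:ℕ) * Real.log 2) := by
        rw [Real.exp_nat_mul, Real.exp_log two_pos]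
      rw [h2k, ← Real.exp_add]
      ring_nf
    refine max_le ?_ (by positivity)
    rw [hc_def, div_mul_eq_mul_div, le_div_iff₀ hlog2, hexp]
    have := Real.add_one_le_exp (Real.log 2 * ((k:ℝ) - 2*μ) - 1)
    linarith
  -- measurability
  have mg : Measurable (fun ω => (2:ℝ)^(N ω)) :=
    (measurable_of_countable (fun k : ℕ => (2:ℝ)^k)).comp hNmeas
  have mmax : Measurable (fun ω => max ((N ω : ℝ) - 2 * μ) 0) :=
    (measurable_of_countable (fun k : ℕ => max ((k:ℝ) - 2*μ) 0)).comp hNmeas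
  -- lintegral of 2^N
  have hg_lint : ∫⁻ ω, ENNReal.ofReal ((2:ℝ)^(N ω)) ∂P = ENNReal.ofReal (Real.exp μ) := by
    rw [aux_lint P N hNmeas (fun k => ENNReal.ofReal ((2:ℝ)^k))]
    rw [tsum_congr (fun k => by
      rw [hN k, ← ENNReal.ofReal_mul (by positivity : (0:ℝ) ≤ (2:ℝ)^k)])]
    exact aux_sum μ hμ.le
  have hg_int : Integrable (fun ω => (2:ℝ)^(N ω)) P := by
    refine ⟨mg.aestronglyMeasurable, ?_⟩
    rw [hasFiniteIntegral_iff_ofReal (ae_of_all _ fun ω => by positivity)]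
    rw [hg_lint]
    exact ENNReal.ofReal_lt_top
  have hg_val : ∫ ω, (2:ℝ)^(N ω) ∂P = Real.exp μ := by
    rw [integral_eq_lintegral_of_nonneg_ae (ae_of_all _ fun ω => by positivity)
      mg.aestronglyMeasurable, hg_lint, ENNReal.toReal_ofReal (Real.exp_nonneg _)]
  have hmax_int : Integrable (fun ω => max ((N ω : ℝ) - 2 * μ) 0) P := by
    refine Integrable.mono' (hg_int.const_mul c) mmax.aestronglyMeasurable
      (ae_of_all _ fun ω => ?_)
    rw [Real.norm_eq_abs, abs_of_nonneg (le_max_right ((N ω : ℝ) - 2*μ) 0)]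
    exact hpt (N ω)
  have hmono : ∫ ω, max ((N ω : ℝ) - 2 * μ) 0 ∂P ≤ ∫ ω, c * (2:ℝ)^(N ω) ∂P :=
    integral_mono hmax_int (hg_int.const_mul c) (fun ω => hpt (N ω))
  rw [integral_const_mul, hg_val] at hmono
  refine hmono.trans ?_
  -- numeric bound
  have hB : Real.exp (-(2*Real.log 2)*μ - 1 + μ) ≤ Real.exp (-μ/3) * Real.exp (-1) := by
    rw [← Real.exp_add]
    apply Real.exp_le_exp.mpr
    nlinarith [Real.log_two_gt_d9, hμ.le]
  have hexp1 : (1:ℝ) ≤ Real.exp 1 := by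
    have := Real.add_one_le_exp (1:ℝ); linarith
  have hC : Real.exp (-1) / Real.log 2 ≤ 6 := by
    rw [div_le_iff₀ hlog2, Real.exp_neg]
    have h1 : Real.exp 1 ≥ 1 := hexp1
    have h2 : (Real.exp 1)⁻¹ ≤ 1 := by
      rw [inv_le_one_iff₀]; right; exact hexp1
    nlinarith [Real.log_two_gt_d9]
  have : c * Real.exp μ = Real.exp (-(2*Real.log 2)*μ - 1 + μ) / Real.log 2 := by
    rw [Real.exp_add, hc_def]; ring
  rw [this]
  calc Real.exp (-(2*Real.log 2)*μ - 1 + μ) / Real.log 2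
      ≤ (Real.exp (-μ/3) * Real.exp (-1)) / Real.log 2 := by
        gcongr
    _ = Real.exp (-μ/3) * (Real.exp (-1) / Real.log 2) := by ring
    _ ≤ Real.exp (-μ/3) * 6 := by
        exact mul_le_mul_of_nonneg_left hC (Real.exp_nonneg _)
    _ = 6 * Real.exp (-μ/3) := by ring
end

section
/- Let J be a finite index set, and for each j ∈ J let X_j be independent Poisson(μ_j)-distributed random variables with μ_j > 0. Let a_j ≥ 0, ν_j ≥ 0 and C be real numbers such that μ_j ≤ ν_j for all j ∈ J and Σ_{j∈J} a_j μ_j ≤ C. Then E[(Σ_{j∈J} a_j X_j − C)⁺] ≤ √(Σ_{j∈J} a_j² ν_j). -/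
open MeasureTheory ProbabilityTheory

section Aux

lemma poisson_p_hasSum_one {r : ℝ} (hr : 0 < r) :
    HasSum (fun k : ℕ => Real.exp (-r) * r ^ k / (Nat.factorial k)) 1 := by
  have h := ProbabilityTheory.poissonPMFRealSum r.toNNReal
  have hc : ((r.toNNReal : ℝ)) = r := Real.coe_toNNReal r hr.le
  simpa [ProbabilityTheory.poissonPMFReal, hc] using h

lemma poisson_shift {r : ℝ} (hr : 0 < r) (n : ℕ) :
    ((n + 1 : ℕ) : ℝ) * (Real.exp (-r) * r ^ (n + 1) / (Nat.factorial (n + 1)))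
      = r * (Real.exp (-r) * r ^ n / (Nat.factorial n)) := by
  have hfac : ((Nat.factorial n : ℝ)) ≠ 0 := by
    exact_mod_cast (Nat.factorial_pos n).ne'
  rw [Nat.factorial_succ]
  push_cast
  field_simp
  ring

lemma poisson_hasSum_mean {r : ℝ} (hr : 0 < r) :
    HasSum (fun k : ℕ => (k : ℝ) * (Real.exp (-r) * r ^ k / (Nat.factorial k))) r := by
  set f : ℕ → ℝ := fun k => (k : ℝ) * (Real.exp (-r) * r ^ k / (Nat.factorial k)) with hf
  have hshift : HasSum (fun n : ℕ => f (n + 1)) r := by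
    have heq : (fun n : ℕ => f (n + 1))
        = fun n => r * (Real.exp (-r) * r ^ n / (Nat.factorial n)) := by
      funext n
      simpa [hf] using poisson_shift hr n
    rw [heq]
    simpa using (poisson_p_hasSum_one hr).mul_left r
  apply (hasSum_nat_add_iff' (f := f) 1).mp
  simpa [hf] using hshift

lemma poisson_hasSum_sq {r : ℝ} (hr : 0 < r) :
    HasSum (fun k : ℕ => (k : ℝ) ^ 2 * (Real.exp (-r) * r ^ k / (Nat.factorial k)))
      (r + r ^ 2) := by
  set f : ℕ → ℝ := fun k => (k : ℝ) ^ 2 * (Real.exp (-r) * r ^ k / (Nat.factorial k)) with hf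
  have hshift : HasSum (fun n : ℕ => f (n + 1)) (r + r ^ 2) := by
    have heq : (fun n : ℕ => f (n + 1))
        = fun n : ℕ => r * ((n : ℝ) * (Real.exp (-r) * r ^ n / (Nat.factorial n)))
          + r * (Real.exp (-r) * r ^ n / (Nat.factorial n)) := by
      funext n
      have hfac : ((Nat.factorial n : ℝ)) ≠ 0 := by
        exact_mod_cast (Nat.factorial_pos n).ne'
      simp only [hf]
      rw [Nat.factorial_succ]
      push_cast
      field_simp
      ring
    rw [heq]
    have h1 := ((poisson_hasSum_mean hr).mul_left r)
    have h2 := ((poisson_p_hasSum_one hr).mul_left r)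
    have h3 := h1.add h2
    have hval : r + r ^ 2 = r * r + r * 1 := by ring
    rw [hval]
    exact h3
  apply (hasSum_nat_add_iff' (f := f) 1).mp
  simpa [hf] using hshift

/-- Moments of a random variable with Poisson-type discrete law. -/
lemma integral_of_discrete_law {Ω : Type*} [MeasurableSpace Ω] (P : Measure Ω)
    [IsProbabilityMeasure P] (Y : Ω → ℕ) (hY : Measurable Y) (p : ℕ → ℝ)
    (hp0 : ∀ k, 0 ≤ p k) (hP : ∀ k, P {ω | Y ω = k} = ENNReal.ofReal (p k))
    (f : ℕ → ℝ) (hf0 : ∀ k, 0 ≤ f k) {s : ℝ} (hs : HasSum (fun k => f k * p k) s) :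
    Integrable (fun ω => f (Y ω)) P ∧ ∫ ω, f (Y ω) ∂P = s := by
  set Q : Measure ℕ := P.map Y with hQdef
  have hQ : ∀ k, Q {k} = ENNReal.ofReal (p k) := by
    intro k
    rw [hQdef, Measure.map_apply hY (measurableSet_singleton k)]
    have : Y ⁻¹' {k} = {ω | Y ω = k} := by ext ω; simp
    rw [this, hP]
  have hfm : Measurable f := measurable_of_countable f
  have hQint : Integrable f Q := by
    refine ⟨hfm.aestronglyMeasurable, ?_⟩
    have hlint : ∫⁻ k, ‖f k‖₊ ∂Q = ENNReal.ofReal s := by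
      rw [lintegral_countable' (fun k => (‖f k‖₊ : ENNReal))]
      have : ∀ k : ℕ, (‖f k‖₊ : ENNReal) * Q {k} = ENNReal.ofReal (f k * p k) := by
        intro k
        rw [hQ k, ← enorm_eq_nnnorm, Real.enorm_eq_ofReal (hf0 k), ← ENNReal.ofReal_mul (hf0 k)]
      rw [tsum_congr this, ← ENNReal.ofReal_tsum_of_nonneg
        (fun k => mul_nonneg (hf0 k) (hp0 k)) hs.summable, hs.tsum_eq]
    rw [HasFiniteIntegral, show (∫⁻ a, ‖f a‖ₑ ∂Q) = ∫⁻ k, (‖f k‖₊ : ENNReal) ∂Q from rfl, hlint]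
    exact ENNReal.ofReal_lt_top
  have hint : Integrable (fun ω => f (Y ω)) P :=
    (integrable_map_measure hfm.aestronglyMeasurable hY.aemeasurable).mp hQint
  refine ⟨hint, ?_⟩
  have hmap : ∫ ω, f (Y ω) ∂P = ∫ k, f k ∂Q :=
    (integral_map hY.aemeasurable hfm.aestronglyMeasurable).symm
  rw [hmap, integral_countable' hQint]
  have : ∀ k : ℕ, (Q {k}).toReal • f k = f k * p k := by
    intro k
    rw [hQ k, ENNReal.toReal_ofReal (hp0 k), smul_eq_mul, mul_comm]
  simp only [measureReal_def]
  rw [tsum_congr this, hs.tsum_eq]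

end Aux

/-- Key estimate for the SPA heuristic: if `X_j` are independent Poisson(μ_j) random
variables, `a_j ≥ 0`, `μ_j ≤ ν_j` and `Σ a_j μ_j ≤ C`, then
`E[(Σ a_j X_j − C)⁺] ≤ √(Σ a_j² ν_j)`. -/
theorem expected_excess_le_sqrt
    {Ω : Type*} [MeasurableSpace Ω] (P : Measure Ω) [IsProbabilityMeasure P]
    {J : Type*} [Fintype J] (X : J → Ω → ℕ) (hXmeas : ∀ j, Measurable (X j))
    (μ ν a : J → ℝ) (C : ℝ)
    (hμ : ∀ j, 0 < μ j) (ha : ∀ j, 0 ≤ a j) (hν : ∀ j, 0 ≤ ν j)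
    (hpois : ∀ j, ∀ k : ℕ, P {ω | X j ω = k}
      = ENNReal.ofReal (Real.exp (-(μ j)) * (μ j) ^ k / (Nat.factorial k)))
    (hindep : iIndepFun X P)
    (hμν : ∀ j, μ j ≤ ν j) (hC : ∑ j, a j * μ j ≤ C) :
    ∫ ω, max (∑ j, a j * (X j ω : ℝ) - C) 0 ∂P ≤ Real.sqrt (∑ j, (a j) ^ 2 * ν j) := by
  classical
  -- moments of each X j
  have hp0 : ∀ j k, 0 ≤ Real.exp (-(μ j)) * (μ j) ^ k / (Nat.factorial k) := by
    intro j k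
    exact div_nonneg (mul_nonneg (Real.exp_nonneg _) (pow_nonneg (hμ j).le k))
      (Nat.cast_nonneg _)
  have hM1 : ∀ j, Integrable (fun ω => ((X j ω : ℝ))) P ∧ ∫ ω, ((X j ω : ℝ)) ∂P = μ j := by
    intro j
    exact integral_of_discrete_law P (X j) (hXmeas j) _ (hp0 j) (hpois j)
      (fun k => (k : ℝ)) (fun k => Nat.cast_nonneg k) (poisson_hasSum_mean (hμ j))
  have hM2 : ∀ j, Integrable (fun ω => ((X j ω : ℝ)) ^ 2) P ∧
      ∫ ω, ((X j ω : ℝ)) ^ 2 ∂P = μ j + μ j ^ 2 := by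
    intro j
    exact integral_of_discrete_law P (X j) (hXmeas j) _ (hp0 j) (hpois j)
      (fun k => (k : ℝ) ^ 2) (fun k => by positivity) (poisson_hasSum_sq (hμ j))
  set m : ℝ := ∑ j, a j * μ j with hm
  set Y : J → Ω → ℝ := fun j ω => a j * ((X j ω : ℝ) - μ j) with hY
  -- integrability and moments of Y j
  have hYint : ∀ j, Integrable (Y j) P := by
    intro j
    exact (((hM1 j).1.sub (integrable_const (μ j))).const_mul (a j))
  have hYmean : ∀ j, ∫ ω, Y j ω ∂P = 0 := by
    intro j
    rw [show Y j = fun ω => a j * ((X j ω : ℝ) - μ j) from rfl]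
    rw [integral_const_mul, integral_sub (hM1 j).1 (integrable_const (μ j)),
      (hM1 j).2, integral_const]
    simp
  have hY2eq : ∀ j, (fun ω => Y j ω * Y j ω) = fun ω =>
      a j ^ 2 * ((X j ω : ℝ) ^ 2) - (2 * μ j * a j ^ 2) * ((X j ω : ℝ)) + a j ^ 2 * μ j ^ 2 := by
    intro j; funext ω; simp only [hY]; ring
  have hY2int : ∀ j, Integrable (fun ω => Y j ω * Y j ω) P := by
    intro j
    rw [hY2eq j]
    exact (((hM2 j).1.const_mul _).sub ((hM1 j).1.const_mul _)).add (integrable_const _)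
  have hY2val : ∀ j, ∫ ω, Y j ω * Y j ω ∂P = a j ^ 2 * μ j := by
    intro j
    have hi2 : Integrable (fun ω => a j ^ 2 * ((X j ω : ℝ) ^ 2)) P :=
      (hM2 j).1.const_mul (a j ^ 2)
    have hi1 : Integrable (fun ω => (2 * μ j * a j ^ 2) * ((X j ω : ℝ))) P :=
      (hM1 j).1.const_mul (2 * μ j * a j ^ 2)
    have hsub : Integrable (fun ω => a j ^ 2 * ((X j ω : ℝ) ^ 2)
        - (2 * μ j * a j ^ 2) * ((X j ω : ℝ))) P := hi2.sub hi1
    rw [hY2eq j, integral_add hsub (integrable_const _), integral_sub hi2 hi1,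
      integral_const_mul, integral_const_mul, (hM1 j).2, (hM2 j).2, integral_const]
    simp only [probReal_univ, smul_eq_mul, one_mul]
    ring
  -- independence of Y i and Y j for i ≠ j
  have hYindep : ∀ i j, i ≠ j → IndepFun (Y i) (Y j) P := by
    intro i j hij
    have h := hindep.indepFun hij
    have hi : Measurable (fun n : ℕ => a i * ((n : ℝ) - μ i)) := measurable_of_countable _
    have hj : Measurable (fun n : ℕ => a j * ((n : ℝ) - μ j)) := measurable_of_countable _
    exact h.comp hi hj
  -- integrability and value of products
  have hprodint : ∀ i j, Integrable (fun ω => Y i ω * Y j ω) P := by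
    intro i j
    by_cases hij : i = j
    · subst hij; exact hY2int i
    · exact (hYindep i j hij).integrable_mul (hYint i) (hYint j)
  have hprodval : ∀ i j, i ≠ j → ∫ ω, Y i ω * Y j ω ∂P = 0 := by
    intro i j hij
    have := (hYindep i j hij).integral_mul_eq_mul_integral (hYint i).1 (hYint j).1
    calc ∫ ω, Y i ω * Y j ω ∂P = ∫ ω, (Y i * Y j) ω ∂P := rfl
      _ = (∫ ω, Y i ω ∂P) * ∫ ω, Y j ω ∂P := this
      _ = 0 := by rw [hYmean i, hYmean j]; ring
  -- the centered sum
  set Z : Ω → ℝ := fun ω => ∑ j, Y j ω with hZ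
  have hZeq : ∀ ω, Z ω = (∑ j, a j * (X j ω : ℝ)) - m := by
    intro ω
    simp only [hZ, hY, hm, mul_sub, Finset.sum_sub_distrib]
  have hZsqint : Integrable (fun ω => Z ω ^ 2) P := by
    have : (fun ω => Z ω ^ 2) = fun ω => ∑ i, ∑ j, Y i ω * Y j ω := by
      funext ω; simp only [hZ, sq, Finset.sum_mul_sum]
    rw [this]
    exact integrable_finset_sum _ fun i _ => integrable_finset_sum _ fun j _ => hprodint i j
  have hZsqval : ∫ ω, Z ω ^ 2 ∂P = ∑ j, a j ^ 2 * μ j := by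
    have he : (fun ω => Z ω ^ 2) = fun ω => ∑ i, ∑ j, Y i ω * Y j ω := by
      funext ω; simp only [hZ, sq, Finset.sum_mul_sum]
    rw [he, integral_finset_sum _ fun i _ =>
      integrable_finset_sum _ fun j _ => hprodint i j]
    have : ∀ i ∈ Finset.univ, (∫ ω, ∑ j, Y i ω * Y j ω ∂P) = a i ^ 2 * μ i := by
      intro i _
      rw [integral_finset_sum _ fun j _ => hprodint i j]
      rw [Finset.sum_eq_single i]
      · exact hY2val i
      · intro j _ hji; exact hprodval i j (fun h => hji h.symm)
      · intro h; exact absurd (Finset.mem_univ i) h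
    rw [Finset.sum_congr rfl this]
  -- variance bound
  set V : ℝ := ∑ j, (a j) ^ 2 * ν j with hV
  have hV0 : 0 ≤ V := Finset.sum_nonneg fun j _ => mul_nonneg (sq_nonneg _) (hν j)
  have hVarV : ∫ ω, Z ω ^ 2 ∂P ≤ V := by
    rw [hZsqval]
    exact Finset.sum_le_sum fun j _ => mul_le_mul_of_nonneg_left (hμν j) (sq_nonneg _)
  set B : ℝ := Real.sqrt V with hB
  by_cases hVzero : V = 0
  · -- all a j = 0
    have haz : ∀ j, a j = 0 := by
      intro j
      have h := (Finset.sum_eq_zero_iff_of_nonneg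
        (fun j _ => mul_nonneg (sq_nonneg (a j)) (hν j))).mp hVzero j (Finset.mem_univ j)
      have hνj : 0 < ν j := lt_of_lt_of_le (hμ j) (hμν j)
      rcases mul_eq_zero.mp h with h2 | h2
      · exact pow_eq_zero_iff two_ne_zero |>.mp h2
      · exact absurd h2 hνj.ne'
    have hm0 : m = 0 := by
      rw [hm]; exact Finset.sum_eq_zero fun j _ => by rw [haz j, zero_mul]
    have hC0 : 0 ≤ C := by rw [hm0] at hC; exact hC
    have hzero : ∀ ω, max ((∑ j, a j * (X j ω : ℝ)) - C) 0 = 0 := by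
      intro ω
      have hs0 : (∑ j, a j * (X j ω : ℝ)) = 0 :=
        Finset.sum_eq_zero fun j _ => by rw [haz j, zero_mul]
      rw [hs0, zero_sub, max_eq_right (by linarith)]
    simp only [hzero, integral_zero]
    exact Real.sqrt_nonneg _
  · have hVpos : 0 < V := lt_of_le_of_ne hV0 (Ne.symm hVzero)
    have hBpos : 0 < B := Real.sqrt_pos.mpr hVpos
    have hBsq : B ^ 2 = V := Real.sq_sqrt hV0
    have hmC : m ≤ C := hC
    -- pointwise bound
    have hpt : ∀ ω, max ((∑ j, a j * (X j ω : ℝ)) - C) 0 ≤ (Z ω ^ 2 + B ^ 2) / (2 * B) := by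
      intro ω
      have hz := hZeq ω
      apply max_le
      · rw [le_div_iff₀ (by positivity : (0:ℝ) < 2 * B)]
        nlinarith [sq_nonneg (Z ω - B), hBpos, hmC]
      · positivity
    have hgint : Integrable (fun ω => (Z ω ^ 2 + B ^ 2) / (2 * B)) P := by
      have : (fun ω => (Z ω ^ 2 + B ^ 2) / (2 * B))
          = fun ω => (Z ω ^ 2 + B ^ 2) * (2 * B)⁻¹ := by
        funext ω; rw [div_eq_mul_inv]
      rw [this]
      exact (hZsqint.add (integrable_const _)).mul_const _
    have hmono : ∫ ω, max ((∑ j, a j * (X j ω : ℝ)) - C) 0 ∂P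
        ≤ ∫ ω, (Z ω ^ 2 + B ^ 2) / (2 * B) ∂P := by
      refine integral_mono_of_nonneg ?_ hgint ?_
      · exact Filter.Eventually.of_forall fun ω => le_max_right _ _
      · exact Filter.Eventually.of_forall hpt
    refine hmono.trans ?_
    have hgval : ∫ ω, (Z ω ^ 2 + B ^ 2) / (2 * B) ∂P
        = ((∫ ω, Z ω ^ 2 ∂P) + B ^ 2) / (2 * B) := by
      rw [integral_div, integral_add hZsqint (integrable_const _), integral_const]
      simp
    rw [hgval]
    rw [div_le_iff₀ (by positivity)]
    nlinarith [hVarV, hBsq]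
end

section
/- Let A be an m×n real matrix, C ∈ ℝ^m, r ∈ ℝ^n, λ ∈ ℝ^n with λ_j ≥ 0, and T > 0. Let Λ : Ω → ℝ^n be an integrable random vector with E[Λ_j] = λ_j T for each j, and let Z : Ω → ℝ^n be a random vector satisfying almost surely A·Z ≤ C (componentwise) and 0 ≤ Z_j ≤ Λ_j for each j. Then Σ_j r_j E[Z_j] ≤ sup{ Σ_j r_j y_j : y ∈ ℝ^n, A·y ≤ C, 0 ≤ y_j ≤ λ_j T for all j }. In particular, the expected hindsight-optimal revenue is at most the optimal value of the deterministic LP. -/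
open MeasureTheory

/-- The expected hindsight-optimal revenue is at most the optimal value of the
deterministic LP: if `A·Z ≤ C` and `0 ≤ Z_j ≤ Λ_j` almost surely, with `E[Λ_j] = λ_j T`,
then `Σ_j r_j E[Z_j]` is at most the DLP value. -/
theorem hindsight_le_dlp
    {Ω : Type*} [MeasurableSpace Ω] (P : Measure Ω) [IsProbabilityMeasure P]
    {m n : ℕ} (A : Matrix (Fin m) (Fin n) ℝ) (C : Fin m → ℝ) (r : Fin n → ℝ)
    (lam : Fin n → ℝ) (hlam : ∀ j, 0 ≤ lam j) (T : ℝ) (hT : 0 < T)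
    (Λ : Ω → Fin n → ℝ) (hΛint : ∀ j, Integrable (fun ω => Λ ω j) P)
    (hΛmean : ∀ j, ∫ ω, Λ ω j ∂P = lam j * T)
    (Z : Ω → Fin n → ℝ) (hZmeas : ∀ j, Measurable (fun ω => Z ω j))
    (hAZ : ∀ᵐ ω ∂P, ∀ l, ∑ j, A l j * Z ω j ≤ C l)
    (hZbound : ∀ᵐ ω ∂P, ∀ j, 0 ≤ Z ω j ∧ Z ω j ≤ Λ ω j) :
    ∑ j, r j * ∫ ω, Z ω j ∂P
      ≤ sSup {v : ℝ | ∃ y : Fin n → ℝ, (∀ l, ∑ j, A l j * y j ≤ C l) ∧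
          (∀ j, 0 ≤ y j ∧ y j ≤ lam j * T) ∧ v = ∑ j, r j * y j} := by
  -- Integrability of each Z j
  have hZint : ∀ j, Integrable (fun ω => Z ω j) P := by
    intro j
    refine Integrable.mono (hΛint j) (hZmeas j).aestronglyMeasurable ?_
    filter_upwards [hZbound] with ω hω
    have h := hω j
    rw [Real.norm_eq_abs, Real.norm_eq_abs, abs_of_nonneg h.1]
    exact h.2.trans (le_abs_self _)
  set y : Fin n → ℝ := fun j => ∫ ω, Z ω j ∂P with hy
  -- feasibility of y
  have hfeas1 : ∀ l, ∑ j, A l j * y j ≤ C l := by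
    intro l
    have : ∑ j, A l j * y j = ∫ ω, ∑ j, A l j * Z ω j ∂P := by
      rw [integral_finset_sum]
      · simp [hy, integral_const_mul]
      · intro j _
        exact (hZint j).const_mul _
    rw [this]
    have hCl : (C l) = ∫ _ω, C l ∂P := by simp
    rw [hCl]
    refine integral_mono_ae ?_ (integrable_const _) ?_
    · exact integrable_finset_sum _ (fun j _ => (hZint j).const_mul _)
    · filter_upwards [hAZ] with ω hω using hω l
  have hfeas2 : ∀ j, 0 ≤ y j ∧ y j ≤ lam j * T := by
    intro j
    constructor
    · refine integral_nonneg_of_ae ?_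
      filter_upwards [hZbound] with ω hω using (hω j).1
    · rw [← hΛmean j]
      refine integral_mono_ae (hZint j) (hΛint j) ?_
      filter_upwards [hZbound] with ω hω using (hω j).2
  -- boundedness above of the LP value set
  have hbdd : BddAbove {v : ℝ | ∃ y : Fin n → ℝ, (∀ l, ∑ j, A l j * y j ≤ C l) ∧
      (∀ j, 0 ≤ y j ∧ y j ≤ lam j * T) ∧ v = ∑ j, r j * y j} := by
    refine ⟨∑ j, |r j| * (lam j * T), ?_⟩
    rintro v ⟨w, _, hw2, rfl⟩
    refine Finset.sum_le_sum fun j _ => ?_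
    calc r j * w j ≤ |r j * w j| := le_abs_self _
      _ = |r j| * |w j| := abs_mul _ _
      _ ≤ |r j| * (lam j * T) := by
          refine mul_le_mul_of_nonneg_left ?_ (abs_nonneg _)
          rw [abs_of_nonneg (hw2 j).1]; exact (hw2 j).2
  exact le_csSup hbdd ⟨y, hfeas1, hfeas2, rfl⟩
end

section
/- Let A be an m×n real matrix with all entries a_{lj} ≥ 0, let r ∈ ℝ^n with r_j ≥ 0, λ ∈ ℝ^n with λ_j ≥ 0, and let b, b' ∈ ℝ^m with b_l ≥ 0 and b'_l ≥ 0 for all l. Define V(c) := max{ Σ_j r_j x_j : A·x ≤ c, 0 ≤ x_j ≤ λ_j for all j } for c ∈ ℝ^m with c ≥ 0, and for each resource l define r^l_max := max{ r_j / a_{lj} : j with a_{lj} > 0 } (with r^l_max := 0 if a_{lj} = 0 for all j). Then V(b) − V(b') ≤ Σ_{l=1}^m r^l_max · (b_l − b'_l)⁺. -/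
open MeasureTheory

/-- The optimal value of the deterministic LP with per-period capacity vector `c`:
`V(c) = max{ Σ_j r_j x_j : A·x ≤ c, 0 ≤ x_j ≤ λ_j }`. -/
noncomputable def dlpValue {m n : ℕ} (A : Matrix (Fin m) (Fin n) ℝ)
    (r lam : Fin n → ℝ) (c : Fin m → ℝ) : ℝ :=
  sSup {v : ℝ | ∃ x : Fin n → ℝ, (∀ l, ∑ j, A l j * x j ≤ c l) ∧
      (∀ j, 0 ≤ x j ∧ x j ≤ lam j) ∧ v = ∑ j, r j * x j}

/-- The largest possible revenue gain by increasing the capacity of resource `l` by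
one unit: `max{ r_j / a_{lj} : a_{lj} > 0 }` (and `0` if `a_{lj} = 0` for all `j`). -/
noncomputable def rMax {m n : ℕ} (A : Matrix (Fin m) (Fin n) ℝ)
    (r : Fin n → ℝ) (l : Fin m) : ℝ :=
  sSup {v : ℝ | ∃ j : Fin n, 0 < A l j ∧ v = r j / A l j}

lemma aux_one_sub_prod {ι : Type*} [DecidableEq ι] (s : Finset ι) (f : ι → ℝ)
    (h0 : ∀ i, 0 ≤ f i) (h1 : ∀ i, f i ≤ 1) :
    1 - ∏ i ∈ s, f i ≤ ∑ i ∈ s, (1 - f i) := by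
  induction s using Finset.induction_on with
  | empty => simp
  | @insert a s ha ih =>
    rw [Finset.prod_insert ha, Finset.sum_insert ha]
    have hp0 : 0 ≤ ∏ i ∈ s, f i := Finset.prod_nonneg fun i _ => h0 i
    have hp1 : ∏ i ∈ s, f i ≤ 1 := Finset.prod_le_one (fun i _ => h0 i) (fun i _ => h1 i)
    nlinarith [h0 a, h1 a]

lemma dlp_bddAbove {m n : ℕ} (A : Matrix (Fin m) (Fin n) ℝ)
    (r lam : Fin n → ℝ) (c : Fin m → ℝ) (hr : ∀ j, 0 ≤ r j) :
    BddAbove {v : ℝ | ∃ x : Fin n → ℝ, (∀ l, ∑ j, A l j * x j ≤ c l) ∧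
      (∀ j, 0 ≤ x j ∧ x j ≤ lam j) ∧ v = ∑ j, r j * x j} := by
  refine ⟨∑ j, r j * lam j, ?_⟩
  rintro v ⟨x, _, hx, rfl⟩
  exact Finset.sum_le_sum fun j _ => mul_le_mul_of_nonneg_left (hx j).2 (hr j)

/-- Sensitivity of the DLP value in the capacity vector:
`V(b) − V(b') ≤ Σ_l r^l_max · (b_l − b'_l)⁺`. -/
theorem dlp_sensitivity {m n : ℕ} (A : Matrix (Fin m) (Fin n) ℝ)
    (r lam : Fin n → ℝ) (b b' : Fin m → ℝ)
    (hA : ∀ l j, 0 ≤ A l j) (hr : ∀ j, 0 ≤ r j) (hlam : ∀ j, 0 ≤ lam j)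
    (hb : ∀ l, 0 ≤ b l) (hb' : ∀ l, 0 ≤ b' l) :
    dlpValue A r lam b - dlpValue A r lam b'
      ≤ ∑ l, rMax A r l * max (b l - b' l) 0 := by
  -- facts about rMax
  have hrM0 : ∀ l, 0 ≤ rMax A r l := by
    intro l
    apply Real.sSup_nonneg
    rintro v ⟨j, hj, rfl⟩
    exact div_nonneg (hr j) (hA l j)
  have hrMle : ∀ l j, 0 < A l j → r j ≤ rMax A r l * A l j := by
    intro l j hj
    have hbdd : BddAbove {v : ℝ | ∃ j : Fin n, 0 < A l j ∧ v = r j / A l j} := by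
      apply (Set.finite_range (fun j : Fin n => r j / A l j)).bddAbove.mono
      rintro v ⟨j, _, rfl⟩; exact ⟨j, rfl⟩
    have := le_csSup hbdd (Set.mem_setOf.2 ⟨j, hj, rfl⟩)
    rw [div_le_iff₀ hj] at this
    exact this
  have key : ∀ v ∈ {v : ℝ | ∃ x : Fin n → ℝ, (∀ l, ∑ j, A l j * x j ≤ b l) ∧
      (∀ j, 0 ≤ x j ∧ x j ≤ lam j) ∧ v = ∑ j, r j * x j},
      v ≤ dlpValue A r lam b' + ∑ l, rMax A r l * max (b l - b' l) 0 := by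
    rintro v ⟨x, hxc, hxb, rfl⟩
    set Sc : Fin m → ℝ := fun l => ∑ j, A l j * x j with hSc_def
    have hSc0 : ∀ l, 0 ≤ Sc l := fun l =>
      Finset.sum_nonneg fun j _ => mul_nonneg (hA l j) (hxb j).1
    set δ : Fin m → ℝ := fun l => min 1 (b' l / Sc l) with hδ_def
    have hδ0 : ∀ l, 0 ≤ δ l := fun l => le_min zero_le_one (div_nonneg (hb' l) (hSc0 l))
    have hδ1 : ∀ l, δ l ≤ 1 := fun l => min_le_left _ _
    set f : Fin m → Fin n → ℝ := fun l j => if 0 < A l j then δ l else 1 with hf_def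
    have hf0 : ∀ l j, 0 ≤ f l j := by
      intro l j; simp only [hf_def]; split <;> [exact hδ0 l; exact zero_le_one]
    have hf1 : ∀ l j, f l j ≤ 1 := by
      intro l j; simp only [hf_def]; split <;> [exact hδ1 l; exact le_refl 1]
    set P : Fin n → ℝ := fun j => ∏ l, f l j with hP_def
    have hP0 : ∀ j, 0 ≤ P j := fun j => Finset.prod_nonneg fun l _ => hf0 l j
    have hP1 : ∀ j, P j ≤ 1 := fun j =>
      Finset.prod_le_one (fun l _ => hf0 l j) (fun l _ => hf1 l j)
    have hPδ : ∀ l j, 0 < A l j → P j ≤ δ l := by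
      intro l j hj
      have h1 : P j = f l j * ∏ i ∈ Finset.univ.erase l, f i j :=
        (Finset.mul_prod_erase Finset.univ (fun i => f i j) (Finset.mem_univ l)).symm
      have h2 : ∏ i ∈ Finset.univ.erase l, f i j ≤ 1 :=
        Finset.prod_le_one (fun i _ => hf0 i j) (fun i _ => hf1 i j)
      have hflj : f l j = δ l := by simp [hf_def, hj]
      calc P j = f l j * ∏ i ∈ Finset.univ.erase l, f i j := h1
        _ ≤ f l j * 1 := by
            apply mul_le_mul_of_nonneg_left h2 (hf0 l j)
        _ = δ l := by rw [mul_one, hflj]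
    set x' : Fin n → ℝ := fun j => x j * P j with hx'_def
    have hx'0 : ∀ j, 0 ≤ x' j := fun j => mul_nonneg (hxb j).1 (hP0 j)
    have hx'lam : ∀ j, x' j ≤ lam j := fun j =>
      le_trans (by simpa using mul_le_mul_of_nonneg_left (hP1 j) (hxb j).1) (hxb j).2
    -- δ l * Sc l ≤ b' l
    have hδS : ∀ l, δ l * Sc l ≤ b' l := by
      intro l
      rcases eq_or_lt_of_le (hSc0 l) with h | h
      · rw [← h, mul_zero]; exact hb' l
      · calc δ l * Sc l ≤ (b' l / Sc l) * Sc l :=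
              mul_le_mul_of_nonneg_right (min_le_right _ _) (hSc0 l)
          _ = b' l := div_mul_cancel₀ _ (ne_of_gt h)
    -- feasibility of x' for b'
    have feas' : ∀ l, ∑ j, A l j * x' j ≤ b' l := by
      intro l
      have h1 : ∀ j, A l j * x' j ≤ (A l j * x j) * δ l := by
        intro j
        rcases eq_or_lt_of_le (hA l j) with h | h
        · simp [← h]
        · have := mul_le_mul_of_nonneg_left (hPδ l j h) (mul_nonneg (le_of_lt h) (hxb j).1)
          calc A l j * x' j = (A l j * x j) * P j := by ring
            _ ≤ (A l j * x j) * δ l := this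
      calc ∑ j, A l j * x' j ≤ ∑ j, (A l j * x j) * δ l := Finset.sum_le_sum fun j _ => h1 j
        _ = δ l * Sc l := by rw [← Finset.sum_mul]; ring
        _ ≤ b' l := hδS l
    -- revenue loss bound
    have hloss : ∑ j, r j * x j - ∑ j, r j * x' j ≤ ∑ l, rMax A r l * max (b l - b' l) 0 := by
      have step1 : ∑ j, r j * x j - ∑ j, r j * x' j = ∑ j, r j * x j * (1 - P j) := by
        rw [← Finset.sum_sub_distrib]
        congr 1; funext j; simp only [hx'_def]; ring
      have step2 : ∀ j, r j * x j * (1 - P j) ≤ ∑ l, r j * x j * (1 - f l j) := by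
        intro j
        rw [← Finset.mul_sum]
        exact mul_le_mul_of_nonneg_left
          (aux_one_sub_prod Finset.univ (fun l => f l j) (fun l => hf0 l j) (fun l => hf1 l j))
          (mul_nonneg (hr j) (hxb j).1)
      have step3 : ∀ l, ∑ j, r j * x j * (1 - f l j) ≤ rMax A r l * max (b l - b' l) 0 := by
        intro l
        have term : ∀ j, r j * x j * (1 - f l j) ≤ rMax A r l * A l j * x j * (1 - δ l) := by
          intro j
          rcases eq_or_lt_of_le (hA l j) with h | h
          · have : f l j = 1 := by simp [hf_def, ← h]
            simp [this, ← h]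
          · have hfδ : f l j = δ l := by simp [hf_def, h]
            rw [hfδ]
            have h1 : r j ≤ rMax A r l * A l j := hrMle l j h
            have h2 : 0 ≤ x j * (1 - δ l) := mul_nonneg (hxb j).1 (by linarith [hδ1 l])
            nlinarith [h2, (hxb j).1, hδ1 l]
        have sum_eq : ∑ j, rMax A r l * A l j * x j * (1 - δ l)
            = rMax A r l * ((1 - δ l) * Sc l) := by
          simp only [hSc_def, Finset.mul_sum]
          congr 1; funext j; ring
        have hSc_le : (1 - δ l) * Sc l ≤ max (b l - b' l) 0 := by
          have h1 : δ l * Sc l ≤ b' l := hδS l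
          have h2 : Sc l ≤ b l := hxc l
          rcases le_total (Sc l) (b' l) with h | h
          · have : Sc l ≤ δ l * Sc l + (1 - δ l) * Sc l := by ring_nf; linarith
            -- (1-δ)Sc = Sc - δ Sc; δ Sc = min Sc b' when Sc > 0... use direct:
            have hδeq : δ l * Sc l = min (Sc l) (b' l) ∨ True := Or.inr trivial
            -- if Sc ≤ b' then b'/Sc ≥ 1 (when Sc>0) so δ = 1
            rcases eq_or_lt_of_le (hSc0 l) with h0 | h0
            · rw [← h0, mul_zero]; exact le_max_right _ _
            · have : (1:ℝ) ≤ b' l / Sc l := (one_le_div h0).2 h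
              have hδ1' : δ l = 1 := by simp [hδ_def, min_eq_left this]
              rw [hδ1']; simpa using le_max_right (b l - b' l) 0
          · -- b' ≤ Sc : (1-δ)Sc = Sc - δ Sc ≤ Sc - ... need δ Sc ≥ b'? 
            rcases eq_or_lt_of_le (hSc0 l) with h0 | h0
            · rw [← h0, mul_zero]; exact le_max_right _ _
            · have : b' l / Sc l ≤ 1 := (div_le_one h0).2 h
              have hδeq : δ l = b' l / Sc l := min_eq_right this
              have : δ l * Sc l = b' l := by
                rw [hδeq]; exact div_mul_cancel₀ _ (ne_of_gt h0)
              have : (1 - δ l) * Sc l = Sc l - b' l := by linarith [this]; 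
              rw [this]
              exact le_trans (le_max_left _ _) (max_le_max (by linarith) (le_refl 0))
        calc ∑ j, r j * x j * (1 - f l j) ≤ ∑ j, rMax A r l * A l j * x j * (1 - δ l) :=
              Finset.sum_le_sum fun j _ => term j
          _ = rMax A r l * ((1 - δ l) * Sc l) := sum_eq
          _ ≤ rMax A r l * max (b l - b' l) 0 :=
              mul_le_mul_of_nonneg_left hSc_le (hrM0 l)
      calc ∑ j, r j * x j - ∑ j, r j * x' j = ∑ j, r j * x j * (1 - P j) := step1
        _ ≤ ∑ j, ∑ l, r j * x j * (1 - f l j) := Finset.sum_le_sum fun j _ => step2 j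
        _ = ∑ l, ∑ j, r j * x j * (1 - f l j) := Finset.sum_comm
        _ ≤ ∑ l, rMax A r l * max (b l - b' l) 0 := Finset.sum_le_sum fun l _ => step3 l
    have hmem : (∑ j, r j * x' j) ∈ {v : ℝ | ∃ x : Fin n → ℝ,
        (∀ l, ∑ j, A l j * x j ≤ b' l) ∧ (∀ j, 0 ≤ x j ∧ x j ≤ lam j) ∧
        v = ∑ j, r j * x j} := ⟨x', feas', fun j => ⟨hx'0 j, hx'lam j⟩, rfl⟩
    have hle : ∑ j, r j * x' j ≤ dlpValue A r lam b' :=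
      le_csSup (dlp_bddAbove A r lam b' hr) hmem
    linarith
  have hne : {v : ℝ | ∃ x : Fin n → ℝ, (∀ l, ∑ j, A l j * x j ≤ b l) ∧
      (∀ j, 0 ≤ x j ∧ x j ≤ lam j) ∧ v = ∑ j, r j * x j}.Nonempty := by
    refine ⟨0, 0, fun l => ?_, fun j => ⟨le_refl 0, hlam j⟩, by simp⟩
    simpa using hb l
  have := csSup_le hne key
  rw [dlpValue]
  linarith [this]
end

section
/- For every integer T ≥ 1, Σ_{t=1}^{T} √( Σ_{i=1}^{t−1} 1/(T−i)² ) ≤ 2√T + √2 (where the inner sum over an empty range is 0). -/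
open Finset

lemma aux1 (T : ℕ) : ∀ t : ℕ, t + 2 ≤ T →
    ∑ i ∈ Finset.Icc 1 t, (1:ℝ)/((T:ℝ)-i)^2 ≤ 1/((T:ℝ)-(t+1)) := by
  intro t
  induction t with
  | zero =>
    intro h
    have h2 : (2:ℝ) ≤ (T:ℝ) := by exact_mod_cast h
    rw [show Finset.Icc 1 0 = (∅ : Finset ℕ) from rfl, Finset.sum_empty]
    rw [one_div]
    apply inv_nonneg.2
    push_cast
    linarith
  | succ t ih =>
    intro h
    rw [Finset.sum_Icc_succ_top (by omega : 1 ≤ t+1)]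
    have ih' := ih (by omega)
    have ha : (2:ℝ) ≤ (T:ℝ) - ((t:ℝ)+1) := by
      have : ((t:ℕ)+3 : ℕ) ≤ T := h
      have : ((t:ℝ)+3) ≤ (T:ℝ) := by exact_mod_cast this
      linarith
    push_cast
    set a : ℝ := (T:ℝ) - ((t:ℝ)+1) with hadef
    have h1 : 0 < a := by linarith
    have h2 : 0 < a - 1 := by linarith
    have hgoal : 1/a + 1/a^2 ≤ 1/(a-1) := by
      rw [div_add_div _ _ (by positivity) (by positivity),
        div_le_div_iff₀ (by positivity) h2]
      nlinarith
    calc ∑ i ∈ Finset.Icc 1 t, (1:ℝ)/((T:ℝ)-(i:ℝ))^2 + 1/((T:ℝ)-((t:ℝ)+1))^2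
        ≤ 1/a + 1/a^2 := add_le_add ih' le_rfl
      _ ≤ 1/(a-1) := hgoal
      _ = 1/((T:ℝ)-((t:ℝ)+1+1)) := by rw [hadef]; ring_nf

lemma aux3 : ∀ n : ℕ, ∑ s ∈ Finset.Icc 1 n, Real.sqrt (1/(s:ℝ)) ≤ 2 * Real.sqrt n := by
  intro n
  induction n with
  | zero => simp
  | succ n ih =>
    rw [Finset.sum_Icc_succ_top (by omega : 1 ≤ n+1)]
    push_cast
    have h1 : Real.sqrt (1/((n:ℝ)+1)) = 1 / Real.sqrt ((n:ℝ)+1) := by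
      rw [one_div, one_div, Real.sqrt_inv]
    rw [h1]
    have hs1 : (0:ℝ) < Real.sqrt ((n:ℝ)+1) := Real.sqrt_pos.2 (by positivity)
    have e1 : Real.sqrt ((n:ℝ)+1) ^ 2 = (n:ℝ)+1 := Real.sq_sqrt (by positivity)
    have e2 : Real.sqrt (n:ℝ) ^ 2 = (n:ℝ) := Real.sq_sqrt (by positivity)
    have key : 1 / Real.sqrt ((n:ℝ)+1) ≤ 2 * (Real.sqrt ((n:ℝ)+1) - Real.sqrt (n:ℝ)) := by
      rw [div_le_iff₀ hs1]
      nlinarith [sq_nonneg (Real.sqrt ((n:ℝ)+1) - Real.sqrt (n:ℝ)), Real.sqrt_nonneg (n:ℝ)]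
    linarith

/-- Summation step for the `O(√T)` bound on the frequent re-solving heuristic:
`Σ_{t=1}^{T} √( Σ_{i=1}^{t−1} 1/(T−i)² ) ≤ 2√T + √2`. -/
theorem sum_sqrt_inv_sq_le (T : ℕ) (hT : 1 ≤ T) :
    ∑ t ∈ Finset.Icc 1 T,
        Real.sqrt (∑ i ∈ Finset.Icc 1 (t - 1), (1 : ℝ) / ((T : ℝ) - (i : ℝ)) ^ 2)
      ≤ 2 * Real.sqrt T + Real.sqrt 2 := by
  obtain ⟨n, rfl⟩ : ∃ n, T = n + 1 := ⟨T - 1, by omega⟩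
  rw [Finset.sum_Icc_succ_top (by omega : 1 ≤ n + 1)]
  have part1 : ∑ t ∈ Finset.Icc 1 n,
      Real.sqrt (∑ i ∈ Finset.Icc 1 (t - 1), (1 : ℝ) / (((n:ℝ)+1) - (i : ℝ)) ^ 2)
      ≤ 2 * Real.sqrt n := by
    calc ∑ t ∈ Finset.Icc 1 n,
        Real.sqrt (∑ i ∈ Finset.Icc 1 (t - 1), (1 : ℝ) / (((n:ℝ)+1) - (i : ℝ)) ^ 2)
        ≤ ∑ t ∈ Finset.Icc 1 n, Real.sqrt (1 / (((n:ℝ)+1) - (t:ℝ))) := by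
          apply Finset.sum_le_sum
          intro t ht
          simp only [Finset.mem_Icc] at ht
          apply Real.sqrt_le_sqrt
          obtain ⟨k, rfl⟩ : ∃ k, t = k + 1 := ⟨t - 1, by omega⟩
          have := aux1 (n+1) k (by omega)
          simpa using this
      _ = ∑ s ∈ Finset.Icc 1 n, Real.sqrt (1 / (s:ℝ)) := by
          apply Finset.sum_nbij' (i := fun t => n + 1 - t) (j := fun s => n + 1 - s)
          · intro a ha; simp only [Finset.mem_Icc] at *; omega
          · intro a ha; simp only [Finset.mem_Icc] at *; omega
          · intro a ha; simp only [Finset.mem_Icc] at ha; omega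
          · intro a ha; simp only [Finset.mem_Icc] at ha; omega
          · intro a ha
            simp only [Finset.mem_Icc] at ha
            congr 1
            rw [Nat.cast_sub (by omega)]
            push_cast
            ring
      _ ≤ 2 * Real.sqrt n := aux3 n
  have part2 : Real.sqrt (∑ i ∈ Finset.Icc 1 (n + 1 - 1), (1 : ℝ) / (((n:ℝ)+1) - (i : ℝ)) ^ 2)
      ≤ Real.sqrt 2 := by
    apply Real.sqrt_le_sqrt
    simp only [Nat.add_sub_cancel]
    rcases Nat.eq_zero_or_pos n with hn | hn
    · subst hn; simp
    obtain ⟨m, rfl⟩ : ∃ m, n = m + 1 := ⟨n - 1, by omega⟩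
    rw [Finset.sum_Icc_succ_top (by omega : 1 ≤ m + 1)]
    have h1 := aux1 (m + 2) m (by omega)
    have h2 : (1:ℝ) / (((m:ℝ)+1+1) - ((m+1:ℕ):ℝ)) ^ 2 = 1 := by push_cast; ring_nf
    have : ∑ i ∈ Finset.Icc 1 m, (1:ℝ) / (((m:ℝ)+1+1) - (i:ℝ)) ^ 2 ≤ 1 := by
      have := aux1 (m + 2) m (by omega)
      push_cast at this
      convert this using 2 <;> push_cast <;> ring_nf
    push_cast
    push_cast at h2
    linarith [this, h2.le]
  have mono : Real.sqrt (n:ℝ) ≤ Real.sqrt ((n:ℝ)+1) := Real.sqrt_le_sqrt (by linarith)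
  push_cast
  push_cast at part1 part2
  linarith
end

section
/- For every real κ > 0 there exists a constant M (depending only on κ) such that for every real T ≥ e^e, setting K := ⌈ log(log T) / log(6/5) ⌉, one has Σ_{u=0}^{K−1} T^{(5/6)^u} · exp( −κ · T^{(5/6)^u / 6} ) ≤ M. -/
private lemma aux_exp_decay (κ : ℝ) (hκ : 0 < κ) (y : ℝ) (hy : 0 < y) :
    y ^ (6 : ℕ) * Real.exp (-κ * y) ≤ 479001600 / κ ^ 12 * (1 / y ^ (6 : ℕ)) := by
  have h12 : ((κ * y) ^ (12 : ℕ)) / (Nat.factorial 12 : ℝ) ≤ Real.exp (κ * y) :=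
    Real.pow_div_factorial_le_exp (κ * y) (by positivity) 12
  have hfac : (Nat.factorial 12 : ℝ) = 479001600 := by norm_num [Nat.factorial]
  have hpos : (0:ℝ) < (κ * y) ^ (12 : ℕ) / 479001600 := by positivity
  have hinv : Real.exp (-κ * y) ≤ 479001600 / (κ * y) ^ (12 : ℕ) := by
    rw [neg_mul, Real.exp_neg]
    rw [hfac] at h12
    calc (Real.exp (κ * y))⁻¹ ≤ ((κ * y) ^ (12 : ℕ) / 479001600)⁻¹ := by
          exact inv_anti₀ hpos h12
      _ = 479001600 / (κ * y) ^ (12 : ℕ) := by rw [inv_div]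
  calc y ^ (6:ℕ) * Real.exp (-κ * y) ≤ y ^ (6:ℕ) * (479001600 / (κ * y) ^ (12:ℕ)) := by
        exact mul_le_mul_of_nonneg_left hinv (by positivity)
    _ = 479001600 / κ ^ 12 * (1 / y ^ (6:ℕ)) := by
        rw [mul_pow]
        field_simp

private lemma aux_geom (r : ℝ) (hr0 : 0 ≤ r) (hr1 : r < 1) (K : ℕ) :
    ∑ j ∈ Finset.range K, r ^ j ≤ 1 / (1 - r) := by
  have h1r : 0 < 1 - r := by linarith
  rw [geom_sum_eq (ne_of_lt hr1)]
  have h2 : (r ^ K - 1) / (r - 1) = (1 - r ^ K) / (1 - r) := by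
    rw [← neg_div_neg_eq]; ring_nf
  rw [h2]
  gcongr
  nlinarith [pow_nonneg hr0 K]

/-- Uniform boundedness of the accumulated failure probabilities in the IRT analysis:
for every `κ > 0` there is `M` such that for every `T ≥ e^e`, with
`K = ⌈log(log T)/log(6/5)⌉`, `Σ_{u=0}^{K−1} T^{(5/6)^u}·exp(−κ·T^{(5/6)^u/6}) ≤ M`. -/
theorem irt_failure_sum_uniformly_bounded (κ : ℝ) (hκ : 0 < κ) :
    ∃ M : ℝ, ∀ T : ℝ, Real.exp (Real.exp 1) ≤ T →
      ∑ u ∈ Finset.range (⌈Real.log (Real.log T) / Real.log (6 / 5)⌉₊),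
          T ^ ((5 / 6 : ℝ) ^ u) * Real.exp (-κ * T ^ ((5 / 6 : ℝ) ^ u / 6)) ≤ M := by
  set r : ℝ := Real.exp (-(1/5)) with hrdef
  have hr1 : r < 1 := by rw [hrdef]; exact Real.exp_lt_one_iff.mpr (by norm_num)
  have hr0 : 0 ≤ r := (Real.exp_pos _).le
  refine ⟨479001600 / κ ^ 12 * (1 / (1 - r)), fun T hT => ?_⟩
  set K := ⌈Real.log (Real.log T) / Real.log (6 / 5)⌉₊ with hKdef
  have hT0 : (0:ℝ) < T := lt_of_lt_of_le (Real.exp_pos _) hT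
  have hL : Real.exp 1 ≤ Real.log T := (Real.le_log_iff_exp_le hT0).mpr hT
  have hLpos : 0 < Real.log T := lt_of_lt_of_le (Real.exp_pos 1) hL
  have hlog65 : 0 < Real.log (6 / 5) := Real.log_pos (by norm_num)
  have key : ∀ u ∈ Finset.range K,
      T ^ ((5 / 6 : ℝ) ^ u) * Real.exp (-κ * T ^ ((5 / 6 : ℝ) ^ u / 6)) ≤
      479001600 / κ ^ 12 * r ^ (K - 1 - u) := by
    intro u hu
    rw [Finset.mem_range] at hu
    have hK1 : K - 1 < K := Nat.sub_lt (by omega) one_pos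
    have h1 : ((K - 1 : ℕ) : ℝ) * Real.log (6 / 5) < Real.log (Real.log T) := by
      have := Nat.lt_ceil.mp (hKdef ▸ hK1)
      exact (lt_div_iff₀ hlog65).mp this
    have h2 : ((6 / 5 : ℝ)) ^ (K - 1) < Real.log T := by
      have hlp : Real.log ((6 / 5 : ℝ) ^ (K - 1)) = ((K - 1 : ℕ) : ℝ) * Real.log (6 / 5) :=
        Real.log_pow _ _
      have h := Real.exp_lt_exp.mpr (hlp ▸ h1)
      rwa [Real.exp_log (by positivity), Real.exp_log hLpos] at h
    have hsplit : (5 / 6 : ℝ) ^ u * (6 / 5) ^ (K - 1) = (6 / 5 : ℝ) ^ (K - 1 - u) := by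
      rw [show K - 1 = (K - 1 - u) + u by omega, pow_add,
        show (5 / 6 : ℝ) ^ u * ((6 / 5) ^ (K - 1 - u) * (6 / 5) ^ u)
          = (6 / 5 : ℝ) ^ (K - 1 - u) * ((5 / 6 * (6 / 5)) ^ u) by rw [mul_pow]; ring]
      norm_num
    have h3 : ((6 / 5 : ℝ)) ^ (K - 1 - u) ≤ (5 / 6 : ℝ) ^ u * Real.log T := by
      rw [← hsplit]
      exact mul_le_mul_of_nonneg_left h2.le (by positivity)
    have h4 : ((K - 1 - u : ℕ) : ℝ) * (1 / 5) ≤ (6 / 5 : ℝ) ^ (K - 1 - u) := by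
      have := one_add_mul_le_pow (show (-2:ℝ) ≤ 1 / 5 by norm_num) (K - 1 - u)
      norm_num at this ⊢
      linarith
    set a : ℝ := (5 / 6 : ℝ) ^ u with hadef
    set y : ℝ := T ^ (a / 6) with hydef
    have hy : 0 < y := Real.rpow_pos_of_pos hT0 _
    have hy6 : y ^ (6 : ℕ) = T ^ a := by
      rw [hydef, ← Real.rpow_natCast (T ^ (a / 6)) 6, ← Real.rpow_mul hT0.le]
      norm_num
    calc T ^ a * Real.exp (-κ * y) = y ^ (6 : ℕ) * Real.exp (-κ * y) := by rw [hy6]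
      _ ≤ 479001600 / κ ^ 12 * (1 / y ^ (6 : ℕ)) := aux_exp_decay κ hκ y hy
      _ = 479001600 / κ ^ 12 * (1 / T ^ a) := by rw [hy6]
      _ ≤ 479001600 / κ ^ 12 * r ^ (K - 1 - u) := by
          refine mul_le_mul_of_nonneg_left ?_ (by positivity)
          rw [Real.rpow_def_of_pos hT0 a, one_div, ← Real.exp_neg, hrdef,
            ← Real.exp_nat_mul]
          apply Real.exp_le_exp.mpr
          have : ((K - 1 - u : ℕ) : ℝ) * (1 / 5) ≤ Real.log T * a := by
            have := h3.trans' h4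
            rw [hadef]; nlinarith
          nlinarith [this]
  calc ∑ u ∈ Finset.range K, T ^ ((5 / 6 : ℝ) ^ u) * Real.exp (-κ * T ^ ((5 / 6 : ℝ) ^ u / 6))
      ≤ ∑ u ∈ Finset.range K, 479001600 / κ ^ 12 * r ^ (K - 1 - u) :=
        Finset.sum_le_sum key
    _ = 479001600 / κ ^ 12 * ∑ u ∈ Finset.range K, r ^ (K - 1 - u) := by
        rw [Finset.mul_sum]
    _ = 479001600 / κ ^ 12 * ∑ j ∈ Finset.range K, r ^ j := by
        rw [Finset.sum_range_reflect (fun j => r ^ j) K]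
    _ ≤ 479001600 / κ ^ 12 * (1 / (1 - r)) :=
        mul_le_mul_of_nonneg_left (aux_geom r hr0 hr1 K) (by positivity)
end
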